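/- Let R be a commutative ring and M a multiplication R-module. If the M-intersection graph G_M(R) is connected and regular of finite degree (i.e., there is a natural number k such that every vertex has exactly k neighbors), then G_M(R) is a complete graph. -/

import Mathlib

/-- The `M`-intersection graph of ideals of `R`: vertices are the nontrivial ideals of `R`,
and two distinct vertices `I`, `J` are adjacent iff `IM ∩ JM ≠ 0`. -/
def interGraph (R M : Type*) [CommRing R] [AddCommGroup M] [Module R M] :
    SimpleGraph {I : Ideal R // I ≠ ⊥ ∧ I ≠ ⊤} where
  Adj I J := I ≠ J ∧ (I.1 • ⊤ ⊓ J.1 • ⊤ : Submodule R M) ≠ ⊥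
  symm := ⟨fun I J h => ⟨h.1.symm, by rw [inf_comm]; exact h.2⟩⟩
  loopless := ⟨fun I h => h.1 rfl⟩

/-- In any graph, if two distinct vertices are nonadjacent yet connected by a walk,
then there is a path of length two whose endpoints are distinct and nonadjacent. -/
private lemma exists_bad_triple {V : Type*} (G : SimpleGraph V) (J : V) :
    ∀ (n : ℕ) (I : V), I ≠ J → ¬ G.Adj I J → ∀ (w : G.Walk I J), w.length = n →
      ∃ X Y Z : V, G.Adj X Y ∧ G.Adj Y Z ∧ X ≠ Z ∧ ¬ G.Adj X Z := by
  intro n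
  induction n using Nat.strong_induction_on with
  | _ n ih =>
    intro I hne hnadj w hw
    cases w with
    | nil => exact absurd rfl hne
    | @cons _ v _ h p =>
      cases p with
      | nil => exact absurd h hnadj
      | @cons _ u _ h2 q =>
        simp only [SimpleGraph.Walk.length_cons] at hw
        by_cases hIu : I = u
        · subst hIu
          exact ih q.length (by omega) I hne hnadj q rfl
        · by_cases hadj : G.Adj I u
          · exact ih (q.length + 1) (by omega) I hne hnadj (SimpleGraph.Walk.cons hadj q)
              (by simp)
          · exact ⟨I, v, u, h, h2, hIu, hadj⟩

/-- If `M` is a multiplication module over a commutative ring `R` and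
`G_M(R)` is a connected regular graph of finite degree, then `G_M(R)` is complete. -/
theorem complete_of_connected_regular (R M : Type*) [CommRing R] [AddCommGroup M] [Module R M]
    [Nontrivial M]
    (hmul : ∀ N : Submodule R M, ∃ I : Ideal R, N = I • ⊤)
    (hconn : (interGraph R M).Connected)
    (hreg : ∃ k : ℕ, ∀ v, ((interGraph R M).neighborSet v).Finite ∧
      ((interGraph R M).neighborSet v).ncard = k) :
    interGraph R M = ⊤ := by
  set G := interGraph R M with hG
  by_contra hGne
  -- extract a nonadjacent distinct pair
  have hbad : ∃ I J, I ≠ J ∧ ¬ G.Adj I J := by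
    by_contra hb
    push_neg at hb
    apply hGne
    ext I J
    simp only [SimpleGraph.top_adj]
    exact ⟨fun h => h.ne, fun h => hb I J h⟩
  obtain ⟨I, J, hIJne, hIJnadj⟩ := hbad
  obtain ⟨w⟩ := hconn.preconnected I J
  obtain ⟨X, Y, Z, hXY, hYZ, hXZne, hXZnadj⟩ :=
    exists_bad_triple G J w.length I hIJne hIJnadj w rfl
  obtain ⟨hXYne, hXY2⟩ := hXY
  obtain ⟨hYZne, hYZ2⟩ := hYZ
  have hXZbot : (X.1 • ⊤ ⊓ Z.1 • ⊤ : Submodule R M) = ⊥ := by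
    by_contra hb
    exact hXZnadj ⟨hXZne, hb⟩
  -- L with L•⊤ = XM ⊓ YM
  obtain ⟨L, hL⟩ := hmul (X.1 • ⊤ ⊓ Y.1 • ⊤ : Submodule R M)
  have hN : (L • ⊤ : Submodule R M) ≠ ⊥ := hL ▸ hXY2
  have hZbot : (Z.1 • ⊤ : Submodule R M) ≠ ⊥ := by
    intro h
    apply hYZ2
    rw [eq_bot_iff]
    exact le_trans inf_le_right h.le
  have hLbot : L ≠ ⊥ := by
    rintro rfl
    exact hN (Submodule.bot_smul ⊤)
  have hLtop : L ≠ ⊤ := by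
    rintro rfl
    rw [Submodule.top_smul] at hL
    have hXtop : (⊤ : Submodule R M) ≤ X.1 • ⊤ := hL.ge.trans inf_le_left
    apply hZbot
    rw [eq_bot_iff, ← hXZbot]
    exact le_inf (le_top.trans hXtop) le_rfl
  set Lv : {I : Ideal R // I ≠ ⊥ ∧ I ≠ ⊤} := ⟨L, hLbot, hLtop⟩ with hLv
  have hLleX : (L • ⊤ : Submodule R M) ≤ X.1 • ⊤ := by rw [← hL]; exact inf_le_left
  have hLleY : (L • ⊤ : Submodule R M) ≤ Y.1 • ⊤ := by rw [← hL]; exact inf_le_right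
  have hLZbot : (L • ⊤ ⊓ Z.1 • ⊤ : Submodule R M) = ⊥ := by
    rw [eq_bot_iff, ← hXZbot]
    exact inf_le_inf_right _ hLleX
  have hLvY : Lv ≠ Y := by
    intro e
    have hY : Y.1 = L := by rw [← e]
    apply hYZ2
    rw [eq_bot_iff, ← hLZbot, hY]
  have hLvZ : Lv ≠ Z := by
    intro e
    have hZ : Z.1 = L := by rw [← e]
    apply hN
    rw [eq_bot_iff, ← hLZbot, hZ]
    exact le_inf le_rfl le_rfl
  obtain ⟨k, hk⟩ := hreg
  obtain ⟨hSfin, hScard⟩ := hk Lv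
  obtain ⟨hTfin, hTcard⟩ := hk Y
  set S := G.neighborSet Lv with hS
  set T := G.neighborSet Y with hT
  -- Y ∈ S
  have hYS : Y ∈ S := by
    show G.Adj Lv Y
    refine ⟨hLvY, ?_⟩
    rwa [show (Lv.1 • ⊤ ⊓ Y.1 • ⊤ : Submodule R M) = L • ⊤ from inf_eq_left.mpr hLleY]
  -- Z ∉ S
  have hZS : Z ∉ S := by
    intro h
    exact h.2 hLZbot
  -- Lv ∉ S
  have hLvS : Lv ∉ S := G.irrefl
  -- the inclusion
  have hsub : insert Z (insert Lv (S \ {Y})) ⊆ T := by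
    rintro A (rfl | hA)
    · exact ⟨hYZne, hYZ2⟩
    · rcases hA with rfl | ⟨hAS, hAY⟩
      · refine ⟨hLvY.symm, ?_⟩
        rw [show (Y.1 • ⊤ ⊓ Lv.1 • ⊤ : Submodule R M) = L • ⊤ from inf_eq_right.mpr hLleY]
        exact hN
      · have hAS' : G.Adj Lv A := hAS
        refine ⟨fun e => hAY (by rw [← e]; rfl), ?_⟩
        intro hb
        apply hAS'.2
        rw [eq_bot_iff, ← hb]
        exact inf_le_inf_right _ hLleY
  -- cardinality contradiction
  have h1 : (S \ {Y}).ncard + 1 = k := by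
    rw [Set.ncard_diff_singleton_add_one hYS hSfin, hScard]
  have h2 : (insert Lv (S \ {Y})).ncard = (S \ {Y}).ncard + 1 :=
    Set.ncard_insert_of_notMem (fun h => hLvS h.1) (hSfin.diff)
  have h3 : (insert Z (insert Lv (S \ {Y}))).ncard = (S \ {Y}).ncard + 2 := by
    rw [Set.ncard_insert_of_notMem ?_ ((hSfin.diff).insert _), h2]
    rintro (h | h)
    · exact hLvZ h.symm
    · exact hZS h.1
  have h4 := Set.ncard_le_ncard hsub hTfin
  rw [h3, hTcard] at h4
  omega
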